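/- Let C ∈ ℝ^{K×R} with R ≥ 2, and suppose every pair of distinct columns of C is linearly independent. Let Π₁, Π₂ be R×R permutation matrices and Λ₁, Λ₂ be R×R invertible diagonal matrices. If C Π₂ Λ₂⁻¹ = C Π₁ Λ₁⁻¹, then Π₁ = Π₂ and Λ₁ = Λ₂. -/

import Mathlib

open Matrix

/-- If every pair of distinct columns of `C` is linearly independent, `Pm₁, Pm₂` are
permutation matrices, `Λ₁, Λ₂` are invertible diagonal matrices, and
`C Pm₂ Λ₂⁻¹ = C Pm₁ Λ₁⁻¹`, then `Pm₁ = Pm₂` and `Λ₁ = Λ₂`. -/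
theorem perm_scaling_ambiguity_unique
    {K R : ℕ} (hR : 2 ≤ R)
    (C : Matrix (Fin K) (Fin R) ℝ)
    (hC : ∀ r s : Fin R, r ≠ s → ∀ a b : ℝ,
      (∀ k, a * C k r + b * C k s = 0) → a = 0 ∧ b = 0)
    (Pm₁ Pm₂ Λ₁ Λ₂ : Matrix (Fin R) (Fin R) ℝ)
    (σ₁ σ₂ : Equiv.Perm (Fin R))
    (hPm₁ : Pm₁ = Matrix.of fun i j => if i = σ₁ j then (1 : ℝ) else 0)
    (hPm₂ : Pm₂ = Matrix.of fun i j => if i = σ₂ j then (1 : ℝ) else 0)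
    (d₁ d₂ : Fin R → ℝ)
    (hd₁ : ∀ r, d₁ r ≠ 0) (hd₂ : ∀ r, d₂ r ≠ 0)
    (hΛ₁ : Λ₁ = Matrix.diagonal d₁) (hΛ₂ : Λ₂ = Matrix.diagonal d₂)
    (heq : C * Pm₂ * Λ₂⁻¹ = C * Pm₁ * Λ₁⁻¹) :
    Pm₁ = Pm₂ ∧ Λ₁ = Λ₂ := by
  subst hPm₁ hPm₂ hΛ₁ hΛ₂
  have key : ∀ k j, (d₂ j)⁻¹ * C k (σ₂ j) = (d₁ j)⁻¹ * C k (σ₁ j) := by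
    intro k j
    have h := congrFun (congrFun heq k) j
    have hinv : ∀ (d : Fin R → ℝ), (∀ r, d r ≠ 0) →
        (Matrix.diagonal d)⁻¹ = Matrix.diagonal fun i => (d i)⁻¹ := fun d hd =>
      Matrix.inv_eq_right_inv (by
        rw [Matrix.diagonal_mul_diagonal]
        simp [mul_inv_cancel₀, hd, Matrix.diagonal_one])
    rw [hinv d₁ hd₁, hinv d₂ hd₂] at h
    simp only [Matrix.mul_apply, Matrix.diagonal_apply, Matrix.of_apply, mul_ite, mul_one, mul_zero, ite_mul, zero_mul,
      Finset.sum_ite_eq', Finset.sum_ite_eq, Finset.mem_univ, if_true] at h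
    linarith [h]
  have hσ : σ₁ = σ₂ := by
    ext j
    by_contra hne
    have hne' : σ₂ j ≠ σ₁ j := fun h => hne (by simp [h.symm])
    have := hC (σ₂ j) (σ₁ j) hne' ((d₂ j)⁻¹) (-(d₁ j)⁻¹) (by
      intro k
      linear_combination key k j)
    exact inv_ne_zero (hd₂ j) this.1
  subst hσ
  have hd : d₁ = d₂ := by
    ext j
    obtain ⟨s, hs⟩ := Fintype.exists_ne_of_one_lt_card (by rw [Fintype.card_fin]; omega) (σ₁ j)
    by_contra hne
    have hconc := hC (σ₁ j) s (Ne.symm hs) ((d₂ j)⁻¹ - (d₁ j)⁻¹) 0 (by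
      intro k
      linear_combination key k j)
    have h0 : (d₂ j)⁻¹ = (d₁ j)⁻¹ := by linarith [hconc.1]
    exact hne (inv_injective h0.symm)
  subst hd
  exact ⟨rfl, rfl⟩
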